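/- Let R be a commutative ring with identity, M an R-module, 𝔮 a prime ideal of R, and Q a submodule of M such that the quotient module M/Q is isomorphic as an R-module to R/𝔮. Then Q is a strongly prime submodule of M. -/

import Mathlib

/-- A proper submodule `P` of `M` is *strongly prime* if whenever
`I_x^P • y ⊆ P` (where `I_x^P = (P + Rx : M)`), either `x ∈ P` or `y ∈ P`. -/
def Submodule.IsStronglyPrime {R M : Type*} [CommRing R] [AddCommGroup M] [Module R M]
    (P : Submodule R M) : Prop :=
  P ≠ ⊤ ∧ ∀ x y : M,
    (∀ r : R, (∀ m : M, r • m ∈ P ⊔ Submodule.span R {x}) → r • y ∈ P) → x ∈ P ∨ y ∈ P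

/-- If `𝔮` is a prime ideal of `R` and `Q` is a submodule of `M` with `M/Q ≅ R/𝔮` as
`R`-modules, then `Q` is a strongly prime submodule of `M`. -/
theorem isStronglyPrime_of_quotient_equiv
    {R M : Type*} [CommRing R] [AddCommGroup M] [Module R M]
    (𝔮 : Ideal R) (h𝔮 : 𝔮.IsPrime) (Q : Submodule R M)
    (e : (M ⧸ Q) ≃ₗ[R] R ⧸ 𝔮) : Q.IsStronglyPrime := by
  constructor
  · intro hQ
    have h1 : Subsingleton (M ⧸ Q) := by
      rw [Submodule.Quotient.subsingleton_iff]; exact hQ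
    have h2 : Subsingleton (R ⧸ 𝔮) := e.toEquiv.symm.subsingleton
    have : 𝔮 = ⊤ := Submodule.Quotient.subsingleton_iff.mp h2
    exact h𝔮.ne_top this
  · intro x y h
    by_contra hxy
    push_neg at hxy
    obtain ⟨hx, hy⟩ := hxy
    have hx' : e (Submodule.Quotient.mk x) ≠ 0 := by
      simp only [ne_eq, map_eq_zero_iff e e.injective, Submodule.Quotient.mk_eq_zero]
      exact hx
    have hy' : e (Submodule.Quotient.mk y) ≠ 0 := by
      simp only [ne_eq, map_eq_zero_iff e e.injective, Submodule.Quotient.mk_eq_zero]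
      exact hy
    obtain ⟨s, hs⟩ := Ideal.Quotient.mk_surjective (e (Submodule.Quotient.mk x))
    have key : ∀ m : M, s • m ∈ Q ⊔ Submodule.span R {x} := by
      intro m
      obtain ⟨u, hu⟩ := Ideal.Quotient.mk_surjective (e (Submodule.Quotient.mk m))
      have h1 : s • m - u • x ∈ Q := by
        rw [← Submodule.Quotient.mk_eq_zero]
        apply e.injective
        rw [map_zero]
        have : Submodule.Quotient.mk (s • m - u • x) =
            s • (Submodule.Quotient.mk m : M ⧸ Q) - u • Submodule.Quotient.mk x := by
          rw [Submodule.Quotient.mk_sub, Submodule.Quotient.mk_smul,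
            Submodule.Quotient.mk_smul]
        rw [this, map_sub, map_smul, map_smul, ← hs, ← hu, Algebra.smul_def,
          Algebra.smul_def, Ideal.Quotient.algebraMap_eq, ← map_mul, ← map_mul,
          mul_comm, sub_self]
      have h2 : s • m = (s • m - u • x) + u • x := by abel
      rw [h2]
      exact Submodule.add_mem_sup h1 (Submodule.smul_mem _ u (Submodule.mem_span_singleton_self x))
    have hsy : s • y ∈ Q := h s key
    have h0 : (Ideal.Quotient.mk 𝔮 s) * e (Submodule.Quotient.mk y) = 0 := by
      obtain ⟨v, hv⟩ := Ideal.Quotient.mk_surjective (e (Submodule.Quotient.mk y))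
      have h3 : e (Submodule.Quotient.mk (s • y)) = 0 := by
        rw [(Submodule.Quotient.mk_eq_zero Q).mpr hsy, map_zero]
      rw [Submodule.Quotient.mk_smul, map_smul, Algebra.smul_def,
        Ideal.Quotient.algebraMap_eq] at h3
      exact h3
    rcases mul_eq_zero.mp h0 with h' | h'
    · rw [hs] at h'; exact hx' h'
    · exact hy' h'
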